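/- Let H be a real inner product space, ε ∈ [0, 1), and x, y ∈ H. Then x ⊥ε_W y if and only if |⟨x, y⟩| ≤ ε‖x‖‖y‖. -/

import Mathlib

open RealInnerProductSpace

/-- in a real inner product space, `x ⊥ε_W y` iff `|⟨x,y⟩| ≤ ε‖x‖‖y‖`. -/
theorem stmt_8 {H : Type*} [NormedAddCommGroup H] [InnerProductSpace ℝ H]
    (ε : ℝ) (hε : ε ∈ Set.Ico (0 : ℝ) 1) (x y : H) :
    |‖(‖y‖ : ℝ) • x + (‖x‖ : ℝ) • y‖ ^ 2 - 2 * ‖x‖ ^ 2 * ‖y‖ ^ 2| ≤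
        2 * ε * ‖x‖ ^ 2 * ‖y‖ ^ 2 ↔
      |⟪x, y⟫| ≤ ε * ‖x‖ * ‖y‖ := by
  have key : ‖(‖y‖ : ℝ) • x + (‖x‖ : ℝ) • y‖ ^ 2 - 2 * ‖x‖ ^ 2 * ‖y‖ ^ 2
      = 2 * (‖x‖ * ‖y‖ * ⟪x, y⟫) := by
    rw [@norm_add_sq_real, real_inner_smul_left, real_inner_smul_right,
      norm_smul, norm_smul]
    simp [Real.norm_eq_abs, abs_of_nonneg (norm_nonneg _), mul_pow]
    ring
  rw [key]
  rcases eq_or_ne x 0 with rfl | hx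
  · simp [abs_of_nonneg hε.1]
  rcases eq_or_ne y 0 with rfl | hy
  · simp [abs_of_nonneg hε.1]
  have hx' : (0:ℝ) < ‖x‖ := norm_pos_iff.mpr hx
  have hy' : (0:ℝ) < ‖y‖ := norm_pos_iff.mpr hy
  rw [abs_mul, abs_mul, abs_of_nonneg (by positivity : (0:ℝ) ≤ ‖x‖*‖y‖),
    abs_of_nonneg (by norm_num : (0:ℝ) ≤ 2)]
  rw [show (2:ℝ)*(‖x‖*‖y‖*|⟪x,y⟫|) = 2*(‖x‖*‖y‖)*|⟪x,y⟫| by ring,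
    show 2*ε*‖x‖^2*‖y‖^2 = 2*(‖x‖*‖y‖)*(ε*‖x‖*‖y‖) by ring]
  exact mul_le_mul_iff_right₀ (by positivity)
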